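/- For every m ≥ 3, the number of permutations of {1,…,m} that avoid the pattern 321 and have exactly 3 inversions is (m+4)(m−1)(m−3)/6. (These are exactly the permutations of length 3 with planar Bruhat graphs.) -/

import Mathlib

open Finset Equiv Equiv.Perm

/-- The (Coxeter) length of a permutation: its number of inversions,
i.e. pairs `i < j` with `σ i > σ j`. -/
def invCount {m : ℕ} (σ : Equiv.Perm (Fin m)) : ℕ :=
  (Finset.univ.filter (fun p : Fin m × Fin m => p.1 < p.2 ∧ σ p.2 < σ p.1)).card


/-- `σ` avoids the pattern `321`: there are no indices `i < j < k` with
`σ i > σ j > σ k`. -/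
def Avoids321 {m : ℕ} (σ : Equiv.Perm (Fin m)) : Prop :=
  ¬ ∃ i j k : Fin m, i < j ∧ j < k ∧ σ k < σ j ∧ σ j < σ i

instance {m : ℕ} : DecidablePred (Avoids321 (m := m)) := fun σ => by
  unfold Avoids321; infer_instance

namespace Aux321

def ins {m : ℕ} (p : Fin (m + 1)) (e : Perm (Fin m)) : Perm (Fin (m + 1)) :=
  (Fin.cycleRange p)⁻¹ * Equiv.Perm.decomposeFin.symm (0, e)

@[simp] lemma ins_zero {m : ℕ} (p : Fin (m + 1)) (e : Perm (Fin m)) : ins p e 0 = p := by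
  show (Fin.cycleRange p)⁻¹ (Equiv.Perm.decomposeFin.symm (0, e) 0) = p
  rw [Equiv.Perm.decomposeFin_symm_apply_zero]
  exact Fin.cycleRange_symm_zero p

@[simp] lemma ins_succ {m : ℕ} (p : Fin (m + 1)) (e : Perm (Fin m)) (i : Fin m) :
    ins p e i.succ = p.succAbove (e i) := by
  show (Fin.cycleRange p)⁻¹ (Equiv.Perm.decomposeFin.symm (0, e) i.succ) = _
  rw [Equiv.Perm.decomposeFin_symm_apply_succ, Equiv.swap_self, Equiv.refl_apply]
  exact Fin.cycleRange_symm_succ p (e i)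

def insEquiv {m : ℕ} : Fin (m + 1) × Perm (Fin m) ≃ Perm (Fin (m + 1)) where
  toFun x := ins x.1 x.2
  invFun σ := (σ 0, (Equiv.Perm.decomposeFin ((Fin.cycleRange (σ 0)) * σ)).2)
  left_inv := by
    rintro ⟨p, e⟩
    rw [Prod.ext_iff]
    refine ⟨ins_zero p e, ?_⟩
    simp only [ins_zero]
    show (Equiv.Perm.decomposeFin (Fin.cycleRange p * ins p e)).2 = e
    rw [ins, ← mul_assoc, mul_inv_cancel, one_mul, Equiv.apply_symm_apply]
  right_inv := by
    intro σ
    show ins (σ 0) (Equiv.Perm.decomposeFin (Fin.cycleRange (σ 0) * σ)).2 = σ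
    set d := Fin.cycleRange (σ 0) * σ with hd
    have h0 : d 0 = 0 := by
      simp [hd, Equiv.Perm.mul_apply, Fin.cycleRange_self]
    have h1 : (Equiv.Perm.decomposeFin d).1 = 0 := by
      have h2 := Equiv.Perm.decomposeFin_symm_apply_zero
        (Equiv.Perm.decomposeFin d).1 (Equiv.Perm.decomposeFin d).2
      rw [Prod.mk.eta, Equiv.symm_apply_apply] at h2
      rw [← h2, h0]
    have h3 : ((0 : Fin (m+1)), (Equiv.Perm.decomposeFin d).2) = Equiv.Perm.decomposeFin d := by
      rw [← h1]
    rw [ins, h3, Equiv.symm_apply_apply, hd, ← mul_assoc, inv_mul_cancel, one_mul]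



lemma card_filter_prod {α β : Type*} [Fintype α] [Fintype β] [DecidableEq α] [DecidableEq β]
    (Q : α × β → Prop) [DecidablePred Q] :
    (Finset.univ.filter Q).card = ∑ a : α, (Finset.univ.filter fun b => Q (a, b)).card := by
  rw [Finset.card_eq_sum_card_fiberwise (f := Prod.fst) (t := Finset.univ)
    (fun x _ => Finset.mem_univ _)]
  refine Finset.sum_congr rfl fun a _ => ?_
  refine Finset.card_nbij' (i := Prod.snd) (j := fun b => (a, b)) ?_ ?_ ?_ ?_
  · rintro ⟨x, y⟩ hx
    simp only [Finset.mem_coe, Finset.mem_filter, Finset.mem_univ, true_and] at hx ⊢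
    obtain ⟨h1, h2⟩ := hx
    subst h2; exact h1
  · intro b hb
    simp only [Finset.mem_coe, Finset.mem_filter, Finset.mem_univ, true_and] at hb ⊢
    simp [hb]
  · rintro ⟨x, y⟩ hx
    simp only [Finset.mem_coe, Finset.mem_filter] at hx
    simp [hx.2]
  · intro b _; rfl

lemma card_filter_succ {m : ℕ} (Q : Fin (m + 1) → Prop) [DecidablePred Q] (h0 : ¬ Q 0) :
    (Finset.univ.filter Q).card = (Finset.univ.filter fun i : Fin m => Q i.succ).card := by
  refine Finset.card_bij' (i := fun a ha => a.pred ?_) (j := fun b _ => b.succ) ?_ ?_ ?_ ?_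
  · rintro rfl
    simp only [Finset.mem_filter] at ha
    exact h0 ha.2
  · intro a ha
    simp only [Finset.mem_filter, Finset.mem_univ, true_and] at ha ⊢
    rwa [Fin.succ_pred]
  · intro b hb
    simp only [Finset.mem_filter, Finset.mem_univ, true_and] at hb ⊢
    exact hb
  · intro a ha; simp
  · intro b hb; simp

lemma invCount_eq_sum {m : ℕ} (σ : Perm (Fin m)) :
    invCount σ = ∑ i : Fin m, (Finset.univ.filter fun j => i < j ∧ σ j < σ i).card :=
  card_filter_prod _

lemma card_filter_val_lt {m : ℕ} (p : Fin (m + 1)) :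
    (Finset.univ.filter fun v : Fin m => v.castSucc < p).card = p.val := by
  have hle : p.val ≤ m := Nat.lt_succ_iff.mp p.isLt
  rw [show p.val = (Finset.range p.val).card from (Finset.card_range _).symm]
  refine Finset.card_nbij (i := Fin.val) ?_ ?_ ?_
  · intro v hv
    simp only [Finset.mem_filter, Finset.mem_univ, true_and, Fin.lt_def] at hv
    simpa using hv
  · intro v _ w _ h; exact Fin.val_injective h
  · intro x hx
    simp only [Finset.coe_range, Set.mem_Iio] at hx
    refine ⟨⟨x, lt_of_lt_of_le hx hle⟩, ?_, rfl⟩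
    simp [Fin.lt_def, hx]


end Aux321

namespace Aux321

lemma invCount_ins {m : ℕ} (p : Fin (m + 1)) (e : Perm (Fin m)) :
    invCount (ins p e) = p.val + invCount e := by
  rw [invCount_eq_sum, Fin.sum_univ_succ]
  congr 1
  · rw [card_filter_succ _ (by simp), ← card_filter_val_lt p]
    refine Finset.card_equiv e (fun i => ?_)
    simp only [Finset.mem_filter, Finset.mem_univ, true_and, ins_zero, ins_succ,
      Fin.succ_pos, true_and, Fin.succAbove_lt_iff_castSucc_lt]
  · rw [invCount_eq_sum]
    refine Finset.sum_congr rfl fun i _ => ?_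
    rw [card_filter_succ _ (by simp [Fin.succ_ne_zero])]
    refine congrArg Finset.card (Finset.filter_congr fun j _ => ?_)
    simp only [ins_succ, Fin.succ_lt_succ_iff, Fin.succAbove_lt_succAbove_iff]

lemma avoids_ins {m : ℕ} (p : Fin (m + 1)) (e : Perm (Fin m)) :
    Avoids321 (ins p e) ↔
      (Avoids321 e ∧ ¬ ∃ a b : Fin m, a < b ∧ e b < e a ∧ (e a).castSucc < p) := by
  have key : (∃ i j k : Fin (m+1), i < j ∧ j < k ∧ ins p e k < ins p e j ∧ ins p e j < ins p e i)
      ↔ ((∃ i j k : Fin m, i < j ∧ j < k ∧ e k < e j ∧ e j < e i)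
        ∨ ∃ a b : Fin m, a < b ∧ e b < e a ∧ (e a).castSucc < p) := by
    constructor
    · rintro ⟨i, j, k, hij, hjk, h1, h2⟩
      obtain ⟨b, rfl⟩ : ∃ b : Fin m, j = b.succ := by
        rcases Fin.eq_zero_or_eq_succ j with h | h
        · exact absurd (h ▸ hij) (by simp)
        · exact h
      obtain ⟨c, rfl⟩ : ∃ c : Fin m, k = c.succ := by
        rcases Fin.eq_zero_or_eq_succ k with h | h
        · exact absurd (h ▸ hjk) (by simp)
        · exact h
      rcases Fin.eq_zero_or_eq_succ i with h | ⟨a, rfl⟩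
      · subst h
        right
        refine ⟨b, c, by simpa using hjk, ?_, ?_⟩
        · rw [ins_succ, ins_succ, Fin.succAbove_lt_succAbove_iff] at h1; exact h1
        · rw [ins_succ, ins_zero, Fin.succAbove_lt_iff_castSucc_lt] at h2; exact h2
      · left
        refine ⟨a, b, c, by simpa using hij, by simpa using hjk, ?_, ?_⟩
        · rw [ins_succ, ins_succ, Fin.succAbove_lt_succAbove_iff] at h1; exact h1
        · rw [ins_succ, ins_succ, Fin.succAbove_lt_succAbove_iff] at h2; exact h2
    · rintro (⟨a, b, c, hab, hbc, h1, h2⟩ | ⟨a, b, hab, h1, h2⟩)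
      · exact ⟨a.succ, b.succ, c.succ, by simpa using hab, by simpa using hbc,
          by simpa [ins_succ, Fin.succAbove_lt_succAbove_iff] using h1,
          by simpa [ins_succ, Fin.succAbove_lt_succAbove_iff] using h2⟩
      · exact ⟨0, a.succ, b.succ, Fin.succ_pos a, by simpa using hab,
          by simpa [ins_succ, Fin.succAbove_lt_succAbove_iff] using h1,
          by simpa [ins_succ, ins_zero, Fin.succAbove_lt_iff_castSucc_lt] using h2⟩
  unfold Avoids321
  rw [key, not_or]

lemma master {m : ℕ} (P : Perm (Fin (m + 1)) → Prop) [DecidablePred P] :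
    (Finset.univ.filter P).card
      = ∑ p : Fin (m + 1), (Finset.univ.filter fun e : Perm (Fin m) => P (ins p e)).card := by
  rw [show (Finset.univ.filter P).card
      = (Finset.univ.filter fun x : Fin (m + 1) × Perm (Fin m) => P (ins x.1 x.2)).card from
    (Finset.card_equiv (insEquiv (m := m)) (fun x => by
      simp only [Finset.mem_filter, Finset.mem_univ, true_and]
      rfl)).symm]
  exact card_filter_prod _

lemma eq_one_of_invCount_eq_zero {m : ℕ} (g : Perm (Fin m)) (h : invCount g = 0) : g = 1 := by
  have hmono : StrictMono g := by
    intro i j hij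
    rcases lt_trichotomy (g i) (g j) with h' | h' | h'
    · exact h'
    · exact absurd (g.injective h') (ne_of_lt hij)
    · exfalso
      have : (i, j) ∈ Finset.univ.filter
          (fun p : Fin m × Fin m => p.1 < p.2 ∧ g p.2 < g p.1) := by
        simp [hij, h']
      rw [invCount, Finset.card_eq_zero] at h
      simp [h] at this
  have := Subsingleton.elim
    (StrictMono.orderIsoOfSurjective (g : Fin m → Fin m) hmono g.surjective)
    (OrderIso.refl (Fin m))
  ext x
  have hx := congrArg (fun f : Fin m ≃o Fin m => f x) this
  rw [show (StrictMono.orderIsoOfSurjective (g : Fin m → Fin m) hmono g.surjective) x = g x from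
    congrFun (StrictMono.coe_orderIsoOfSurjective _ hmono g.surjective) x] at hx
  exact congrArg Fin.val (by simpa using hx)

lemma avoids_of_invCount_le_two {m : ℕ} (e : Perm (Fin m)) (h : invCount e ≤ 2) :
    Avoids321 e := by
  rintro ⟨i, j, k, hij, hjk, h1, h2⟩
  have hik : i < k := lt_trans hij hjk
  have h3 : e k < e i := lt_trans h1 h2
  have hsub : ({(i, j), (i, k), (j, k)} : Finset (Fin m × Fin m)) ⊆
      Finset.univ.filter (fun p : Fin m × Fin m => p.1 < p.2 ∧ e p.2 < e p.1) := by
    intro x hx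
    simp only [Finset.mem_insert, Finset.mem_singleton] at hx
    rcases hx with rfl | rfl | rfl <;> simp [hij, hjk, hik, h1, h2, h3]
  have hcard : ({(i, j), (i, k), (j, k)} : Finset (Fin m × Fin m)).card = 3 := by
    rw [Finset.card_insert_of_notMem (by simp [Prod.ext_iff, hij.ne, hjk.ne]),
      Finset.card_insert_of_notMem (by simp [Prod.ext_iff, hij.ne]), Finset.card_singleton]
  have := Finset.card_le_card hsub
  rw [hcard] at this
  rw [invCount] at h
  omega

lemma invCount_one {m : ℕ} : invCount (1 : Perm (Fin m)) = 0 := by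
  rw [invCount, Finset.card_eq_zero, Finset.eq_empty_iff_forall_notMem]
  rintro ⟨i, j⟩ hmem
  rw [Finset.mem_filter] at hmem
  simp only [Finset.mem_filter, Finset.mem_univ, true_and, Perm.coe_one, id_eq] at hmem
  exact lt_asymm hmem.1 hmem.2

lemma filter_invCount_zero {m : ℕ} :
    (Finset.univ.filter fun e : Perm (Fin m) => invCount e = 0) = {1} := by
  ext e
  simp only [Finset.mem_filter, Finset.mem_univ, true_and, Finset.mem_singleton]
  exact ⟨eq_one_of_invCount_eq_zero e, fun h => h ▸ invCount_one⟩

lemma invCount_swap01 {k : ℕ} : invCount (Equiv.swap 0 1 : Perm (Fin (k + 2))) = 1 := by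
  have : (Finset.univ.filter fun p : Fin (k+2) × Fin (k+2) =>
      p.1 < p.2 ∧ (Equiv.swap 0 1 : Perm (Fin (k+2))) p.2 < (Equiv.swap 0 1 : Perm (Fin (k+2))) p.1)
      = {((0 : Fin (k+2)), (1 : Fin (k+2)))} := by
    ext ⟨i, j⟩
    simp only [Finset.mem_filter, Finset.mem_univ, true_and, Finset.mem_singleton, Prod.ext_iff]
    constructor
    · rintro ⟨hij, hlt⟩
      rw [Equiv.swap_apply_def, Equiv.swap_apply_def] at hlt
      have hij' := Fin.lt_def.mp hij
      split_ifs at hlt with h1 h2 h3 h4 h5 h6 h7 h8 <;>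
        simp_all only [Fin.lt_def, Fin.ext_iff, Fin.val_zero, Fin.val_one] <;>
        first
        | exact ⟨trivial, trivial⟩
        | omega
    · rintro ⟨rfl, rfl⟩
      refine ⟨Fin.lt_def.mpr (by simp), ?_⟩
      rw [Equiv.swap_apply_left, Equiv.swap_apply_right]
      exact Fin.lt_def.mpr (by simp)
  rw [invCount, this, Finset.card_singleton]

lemma two_le_val {k : ℕ} {x : Fin (k + 2)} (h0 : x ≠ 0) (h1 : x ≠ 1) : 2 ≤ x.val := by
  rw [Ne, Fin.ext_iff] at h0 h1
  simp only [Fin.val_zero, Fin.val_one] at h0 h1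
  omega

lemma eq_swap01 {k : ℕ} (e : Perm (Fin (k + 2))) (h1 : invCount e = 1) {a b : Fin (k + 2)}
    (hab : a < b) (hba : e b < e a) (hv : (e a).val < 2) : e = Equiv.swap 0 1 := by
  rw [invCount] at h1
  obtain ⟨x, hx⟩ := Finset.card_eq_one.mp h1
  have hmem : (a, b) ∈ Finset.univ.filter
      (fun p : Fin (k+2) × Fin (k+2) => p.1 < p.2 ∧ e p.2 < e p.1) := by simp [hab, hba]
  have hxab : x = (a, b) := by rw [hx, Finset.mem_singleton] at hmem; exact hmem.symm
  have huniq : ∀ i j : Fin (k+2), i < j → e j < e i → i = a ∧ j = b := by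
    intro i j hij hji
    have hm : (i, j) ∈ Finset.univ.filter
        (fun p : Fin (k+2) × Fin (k+2) => p.1 < p.2 ∧ e p.2 < e p.1) := by simp [hij, hji]
    rw [hx, hxab, Finset.mem_singleton, Prod.ext_iff] at hm
    exact hm
  have hba' := Fin.lt_def.mp hba
  have hea : (e a).val = 1 := by omega
  have heb : (e b).val = 0 := by omega
  have ha0 : a = 0 := by
    by_contra hne
    have h0a : (0 : Fin (k+2)) < a := Fin.pos_of_ne_zero hne
    have h0b : (0 : Fin (k+2)) < b := lt_trans h0a hab
    have hfne : e 0 ≠ e b := fun hh => absurd (e.injective hh) (ne_of_lt h0b)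
    have : e b < e 0 := by
      rw [Fin.lt_def, heb]
      rcases Nat.eq_zero_or_pos (e 0).val with h | h
      · exact absurd (Fin.ext (h.trans heb.symm) : e 0 = e b) hfne
      · exact h
    exact hne ((huniq 0 b h0b this).1.symm ▸ rfl)
  have hb1 : b = 1 := by
    by_contra hne
    have hbne0 : b ≠ 0 := by
      intro hh; rw [hh] at hab; exact absurd hab (by simp [ha0])
    have h1b : (1 : Fin (k+2)) < b := by
      have := two_le_val hbne0 hne
      rw [Fin.lt_def, Fin.val_one]; omega
    have hfne : e 1 ≠ e b := fun hh => absurd (e.injective hh) (ne_of_lt h1b)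
    have : e b < e 1 := by
      rw [Fin.lt_def, heb]
      rcases Nat.eq_zero_or_pos (e 1).val with h | h
      · exact absurd (Fin.ext (h.trans heb.symm) : e 1 = e b) hfne
      · exact h
    have h10 := (huniq 1 b h1b this).1
    rw [ha0] at h10
    exact absurd h10 one_ne_zero
  subst ha0 hb1
  have he0 : e 0 = 1 := Fin.ext (by simpa using hea)
  have he1 : e 1 = 0 := Fin.ext (by simpa using heb)
  have key : ∀ x : Fin (k+2), x ≠ 0 → x ≠ 1 →
      (Equiv.swap 0 1) (e x) = e x ∧ 2 ≤ (e x).val := by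
    intro x hx0 hx1
    have hne0 : e x ≠ 0 := fun hh => hx1 (e.injective (hh.trans he1.symm))
    have hne1 : e x ≠ 1 := fun hh => hx0 (e.injective (hh.trans he0.symm))
    exact ⟨Equiv.swap_apply_of_ne_of_ne hne0 hne1, two_le_val hne0 hne1⟩
  have hg : invCount (Equiv.swap 0 1 * e) = 0 := by
    rw [invCount, Finset.card_eq_zero, Finset.eq_empty_iff_forall_notMem]
    rintro ⟨i, j⟩ hmem2
    rw [Finset.mem_filter] at hmem2
    simp only [Finset.mem_filter, Finset.mem_univ, true_and, Perm.mul_apply] at hmem2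
    obtain ⟨hij, hji⟩ := hmem2
    by_cases hi0 : i = 0
    · subst hi0
      rw [he0, Equiv.swap_apply_right] at hji
      exact Fin.not_lt_zero _ hji
    by_cases hi1 : i = 1
    · subst hi1
      rw [he1, Equiv.swap_apply_left] at hji
      have hj0 : j ≠ 0 := fun hh => by
        rw [hh] at hij; exact Fin.not_lt_zero _ hij
      have hj1 : j ≠ 1 := ne_of_gt hij
      obtain ⟨hfix, hge⟩ := key j hj0 hj1
      rw [hfix] at hji
      have := Fin.lt_def.mp hji
      simp only [Fin.val_one] at this
      omega
    · have hij' := Fin.lt_def.mp hij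
      have hi2 := two_le_val hi0 hi1
      have hj0 : j ≠ 0 := by rw [Ne, Fin.ext_iff]; simp; omega
      have hj1 : j ≠ 1 := by rw [Ne, Fin.ext_iff]; simp [Fin.val_one]; omega
      obtain ⟨hfi, _⟩ := key i hi0 hi1
      obtain ⟨hfj, _⟩ := key j hj0 hj1
      rw [hfi, hfj] at hji
      exact hi0 (huniq i j hij hji).1
  have hone := eq_one_of_invCount_eq_zero _ hg
  have h2 : e = (Equiv.swap 0 1 : Perm (Fin (k+2)))⁻¹ := eq_inv_of_mul_eq_one_right hone
  rw [h2, Equiv.swap_inv]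

lemma sum_range_trunc (c : ℕ) {n : ℕ} (h : c ≤ n) (G : ℕ → ℕ) (hG : ∀ v, c ≤ v → G v = 0) :
    ∑ v ∈ Finset.range n, G v = ∑ v ∈ Finset.range c, G v :=
  (Finset.sum_subset (Finset.range_subset_range.mpr h) (fun x _ hx =>
    hG x (le_of_not_gt (fun hc => hx (Finset.mem_range.mpr hc))))).symm

lemma N0_card {m : ℕ} : (Finset.univ.filter fun e : Perm (Fin m) => invCount e = 0).card = 1 := by
  rw [filter_invCount_zero, Finset.card_singleton]

lemma N1_succ {m : ℕ} (hm : 1 ≤ m) :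
    (Finset.univ.filter fun σ : Perm (Fin (m+1)) => invCount σ = 1).card
      = (Finset.univ.filter fun e : Perm (Fin m) => invCount e = 1).card + 1 := by
  rw [master]
  have hcong : ∀ p : Fin (m + 1),
      (Finset.univ.filter fun e : Perm (Fin m) => invCount (ins p e) = 1)
        = (Finset.univ.filter fun e : Perm (Fin m) => p.val + invCount e = 1) := by
    intro p
    exact Finset.filter_congr fun e _ => by rw [invCount_ins]
  rw [Finset.sum_congr rfl fun p _ => congrArg Finset.card (hcong p)]
  rw [Fin.sum_univ_eq_sum_range
    (fun v => (Finset.univ.filter fun e : Perm (Fin m) => v + invCount e = 1).card) (m+1)]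
  rw [sum_range_trunc 2 (by omega)
    (fun v => (Finset.univ.filter fun e : Perm (Fin m) => v + invCount e = 1).card)
    (fun v hv => by
      rw [Finset.card_eq_zero, Finset.eq_empty_iff_forall_notMem]
      intro e he
      simp only [Finset.mem_filter] at he
      omega)]
  rw [Finset.sum_range_succ, Finset.sum_range_one]
  congr 1
  · refine congrArg Finset.card (Finset.filter_congr fun e _ => ?_)
    simp only [zero_add]
  · rw [show (Finset.univ.filter fun e : Perm (Fin m) => 1 + invCount e = 1)
        = (Finset.univ.filter fun e : Perm (Fin m) => invCount e = 0) from
      Finset.filter_congr fun e _ => by omega]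
    exact N0_card

lemma N1_eq : ∀ m : ℕ, (Finset.univ.filter fun e : Perm (Fin m) => invCount e = 1).card = m - 1 := by
  intro m
  induction m with
  | zero =>
    rw [Finset.card_eq_zero, Finset.eq_empty_iff_forall_notMem]
    intro e he
    simp only [Finset.mem_filter, Finset.mem_univ, true_and] at he
    have : e = 1 := by ext x; exact x.elim0
    rw [this, invCount_one] at he
    exact absurd he (by norm_num)
  | succ n ih =>
    match n, ih with
    | 0, _ =>
      rw [Finset.card_eq_zero, Finset.eq_empty_iff_forall_notMem]
      intro e he
      simp only [Finset.mem_filter, Finset.mem_univ, true_and] at he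
      have : e = 1 := by
        have hsub : ∀ y : Fin (0+1), y = 0 := fun y => Fin.fin_one_eq_zero y
        ext x
        rw [hsub (e x), hsub ((1 : Perm (Fin (0+1))) x)]
      rw [this, invCount_one] at he
      exact absurd he (by norm_num)
    | Nat.succ k, ih =>
      rw [N1_succ (by omega), ih]
      omega

lemma N2_succ {m : ℕ} (hm : 2 ≤ m) :
    (Finset.univ.filter fun σ : Perm (Fin (m+1)) => invCount σ = 2).card
      = (Finset.univ.filter fun e : Perm (Fin m) => invCount e = 2).card
        + (Finset.univ.filter fun e : Perm (Fin m) => invCount e = 1).card + 1 := by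
  rw [master]
  rw [Finset.sum_congr rfl fun p _ => congrArg Finset.card
    (Finset.filter_congr fun e _ => by rw [invCount_ins])]
  rw [Fin.sum_univ_eq_sum_range
    (fun v => (Finset.univ.filter fun e : Perm (Fin m) => v + invCount e = 2).card) (m+1)]
  rw [sum_range_trunc 3 (by omega)
    (fun v => (Finset.univ.filter fun e : Perm (Fin m) => v + invCount e = 2).card)
    (fun v hv => by
      rw [Finset.card_eq_zero, Finset.eq_empty_iff_forall_notMem]
      intro e he
      simp only [Finset.mem_filter] at he
      omega)]
  rw [Finset.sum_range_succ, Finset.sum_range_succ, Finset.sum_range_one]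
  congr 1
  congr 1
  · refine congrArg Finset.card (Finset.filter_congr fun e _ => ?_)
    simp only [zero_add]
  · refine congrArg Finset.card (Finset.filter_congr fun e _ => ?_)
    omega
  · rw [show (Finset.univ.filter fun e : Perm (Fin m) => 2 + invCount e = 2)
        = (Finset.univ.filter fun e : Perm (Fin m) => invCount e = 0) from
      Finset.filter_congr fun e _ => by omega]
    exact N0_card

lemma N2_eq : ∀ m : ℕ,
    2 * (Finset.univ.filter fun e : Perm (Fin m) => invCount e = 2).card = (m + 1) * (m - 2) := by
  intro m
  match m with
  | 0 => decide
  | 1 => decide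
  | 2 => decide
  | Nat.succ (Nat.succ (Nat.succ k)) =>
    have ih := N2_eq (k + 2)
    rw [N2_succ (by omega), N1_eq]
    have h1 : k + 2 - 1 = k + 1 := rfl
    have h2 : k + 2 - 2 = k := rfl
    have h3 : k + 2 + 1 + 1 - 2 = k + 2 := rfl
    rw [h1] at *
    rw [h2] at ih
    rw [show k + 2 + 1 - 2 = k + 1 from rfl]
    zify at ih ⊢
    linear_combination ih

lemma A3_succ {k : ℕ} :
    (Finset.univ.filter fun σ : Perm (Fin (k+3+1)) => Avoids321 σ ∧ invCount σ = 3).card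
      = (Finset.univ.filter fun e : Perm (Fin (k+3)) => Avoids321 e ∧ invCount e = 3).card
        + (Finset.univ.filter fun e : Perm (Fin (k+3)) => invCount e = 2).card
        + ((Finset.univ.filter fun e : Perm (Fin (k+3)) => invCount e = 1).card - 1) + 1 := by
  rw [master]
  have hcong : ∀ p : Fin (k+3+1),
      (Finset.univ.filter fun e : Perm (Fin (k+3)) => Avoids321 (ins p e) ∧ invCount (ins p e) = 3)
        = (Finset.univ.filter fun e : Perm (Fin (k+3)) =>
            (Avoids321 e ∧ ¬ ∃ a b : Fin (k+3), a < b ∧ e b < e a ∧ (e a).val < p.val)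
              ∧ p.val + invCount e = 3) := by
    intro p
    refine Finset.filter_congr fun e _ => ?_
    rw [avoids_ins, invCount_ins]
    constructor
    · rintro ⟨⟨h1, h2⟩, h3⟩
      refine ⟨⟨h1, ?_⟩, h3⟩
      rintro ⟨a, b, hab, hba, hv⟩
      exact h2 ⟨a, b, hab, hba, Fin.lt_def.mpr (by simpa using hv)⟩
    · rintro ⟨⟨h1, h2⟩, h3⟩
      refine ⟨⟨h1, ?_⟩, h3⟩
      rintro ⟨a, b, hab, hba, hv⟩
      exact h2 ⟨a, b, hab, hba, by simpa using Fin.lt_def.mp hv⟩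
  rw [Finset.sum_congr rfl fun p _ => congrArg Finset.card (hcong p)]
  rw [Fin.sum_univ_eq_sum_range
    (fun v => (Finset.univ.filter fun e : Perm (Fin (k+3)) =>
      (Avoids321 e ∧ ¬ ∃ a b : Fin (k+3), a < b ∧ e b < e a ∧ (e a).val < v)
        ∧ v + invCount e = 3).card) (k+3+1)]
  rw [sum_range_trunc 4 (by omega)
    (fun v => (Finset.univ.filter fun e : Perm (Fin (k+3)) =>
      (Avoids321 e ∧ ¬ ∃ a b : Fin (k+3), a < b ∧ e b < e a ∧ (e a).val < v)
        ∧ v + invCount e = 3).card)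
    (fun v hv => by
      rw [Finset.card_eq_zero, Finset.eq_empty_iff_forall_notMem]
      intro e he
      simp only [Finset.mem_filter] at he
      omega)]
  rw [Finset.sum_range_succ, Finset.sum_range_succ, Finset.sum_range_succ,
    Finset.sum_range_one]
  congr 1
  congr 1
  congr 1
  · -- v = 0 : count of avoiders with 3 inversions
    refine congrArg Finset.card (Finset.filter_congr fun e _ => ?_)
    simp only [Nat.not_lt_zero, and_false, false_and, exists_false, not_false_iff,
      and_true, zero_add]
  · -- v = 1 : perms with 2 inversions
    refine congrArg Finset.card (Finset.filter_congr fun e _ => ?_)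
    constructor
    · rintro ⟨-, h3⟩; omega
    · intro h2
      have hA : Avoids321 e := avoids_of_invCount_le_two e (by omega)
      refine ⟨⟨hA, ?_⟩, by omega⟩
      rintro ⟨a, b, hab, hba, hv⟩
      have := Fin.lt_def.mp hba
      omega
  · -- v = 2 : perms with 1 inversion, except swap 0 1
    have hset : (Finset.univ.filter fun e : Perm (Fin (k+3)) =>
        (Avoids321 e ∧ ¬ ∃ a b : Fin (k+3), a < b ∧ e b < e a ∧ (e a).val < 2)
          ∧ 2 + invCount e = 3)
        = (Finset.univ.filter fun e : Perm (Fin (k+3)) => invCount e = 1).erase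
            (Equiv.swap 0 1) := by
      ext e
      simp only [Finset.mem_filter, Finset.mem_univ, true_and, Finset.mem_erase]
      constructor
      · rintro ⟨⟨hA, hcond⟩, h3⟩
        have h1 : invCount e = 1 := by omega
        refine ⟨?_, h1⟩
        rintro rfl
        refine hcond ⟨0, 1, ?_, ?_, ?_⟩
        · exact Fin.lt_def.mpr (by simp)
        · rw [Equiv.swap_apply_left, Equiv.swap_apply_right]
          exact Fin.lt_def.mpr (by simp)
        · rw [Equiv.swap_apply_left]
          simp
      · rintro ⟨hne, h1⟩
        have hA : Avoids321 e := avoids_of_invCount_le_two e (by omega)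
        refine ⟨⟨hA, ?_⟩, by omega⟩
        rintro ⟨a, b, hab, hba, hv⟩
        exact hne (eq_swap01 (k := k + 1) e h1 hab hba hv)
    rw [hset, Finset.card_erase_of_mem]
    simp only [Finset.mem_filter, Finset.mem_univ, true_and]
    exact invCount_swap01 (k := k + 1)
  · -- v = 3 : only the identity
    have hset : (Finset.univ.filter fun e : Perm (Fin (k+3)) =>
        (Avoids321 e ∧ ¬ ∃ a b : Fin (k+3), a < b ∧ e b < e a ∧ (e a).val < 3)
          ∧ 3 + invCount e = 3) = {1} := by
      ext e
      simp only [Finset.mem_filter, Finset.mem_univ, true_and, Finset.mem_singleton]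
      constructor
      · rintro ⟨-, h3⟩
        exact eq_one_of_invCount_eq_zero e (by omega)
      · rintro rfl
        refine ⟨⟨avoids_of_invCount_le_two 1 (by rw [invCount_one]; omega), ?_⟩, ?_⟩
        · rintro ⟨a, b, hab, hba, -⟩
          simp only [Perm.coe_one, id_eq] at hba
          exact lt_asymm hab hba
        · rw [invCount_one]
      
    rw [hset, Finset.card_singleton]

lemma main6 : ∀ m : ℕ, 3 ≤ m →
    6 * (Finset.univ.filter fun σ : Perm (Fin m) => Avoids321 σ ∧ invCount σ = 3).card
      = (m + 4) * (m - 1) * (m - 3) := by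
  intro m hm
  induction m with
  | zero => omega
  | succ n ih =>
    rcases Nat.lt_or_ge n 3 with hlt | hge
    · interval_cases n
      · omega
      · omega
      · -- m = 3
        have : (Finset.univ.filter
            fun σ : Perm (Fin 3) => Avoids321 σ ∧ invCount σ = 3).card = 0 := by decide
        rw [this]
    · have ih' := ih hge
      obtain ⟨k, rfl⟩ : ∃ k, n = k + 3 := ⟨n - 3, by omega⟩
      rw [A3_succ, N1_eq]
      have h2 := N2_eq (k + 3)
      have e1 : k + 3 - 1 - 1 = k + 1 := by omega
      have e2 : k + 3 - 2 = k + 1 := by omega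
      have e3 : k + 3 + 1 - 1 = k + 3 := by omega
      have e4 : k + 3 + 1 - 3 = k + 1 := by omega
      have e5 : k + 3 - 1 = k + 2 := by omega
      have e6 : k + 3 - 3 = k := by omega
      rw [e1, e3, e4]
      rw [e5, e6] at ih'
      rw [e2] at h2
      zify at ih' h2 ⊢
      linear_combination ih' + 3 * h2

end Aux321

/-- For every `m ≥ 3`, there are `(m+4)(m-1)(m-3)/6` permutations of `{1,…,m}` that
avoid `321` and have exactly 3 inversions. -/
theorem card_length_three_avoiding_321 {m : ℕ} (hm : 3 ≤ m) :
    (Finset.univ.filter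
        (fun σ : Equiv.Perm (Fin m) => Avoids321 σ ∧ invCount σ = 3)).card =
      (m + 4) * (m - 1) * (m - 3) / 6 := by
  have h6 := Aux321.main6 m hm
  rw [← h6, Nat.mul_div_cancel_left _ (by norm_num : 0 < 6)]
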